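/- Let N ≥ 1, a ∈ (0,1), λ_j > 0 with Λ := diag(λ_j), let p be an N×N stochastic matrix, let v, π ∈ ℂ^N, let 0 < ε < min_j λ_j, and let b_j : (−ε, ε) → ℂ be differentiable at 0 with b_j(0) = 1. Set L(s) := diag(λ_j/(λ_j − s)), B(s) := diag(b_j(s)) and H(s) := L(s) pᵀ B(s) for s ∈ (−ε, ε). Suppose Z : (−ε, ε) → ℂ^N is differentiable at 0 with Z(0) = π and satisfies Z(s) = H(s) Z(a s) − s Λ^{-1} L(s) v for all s ∈ (−ε, ε). Then (1 − a pᵀ) Z'(0) = (Λ^{-1} pᵀ + pᵀ B'(0)) π − Λ^{-1} v, where B'(0) := diag(b_j'(0)); consequently, if 1 − a pᵀ is invertible, the mean-workload vector M := −Z'(0) equals (a pᵀ − 1)^{-1} ((Λ^{-1} pᵀ + pᵀ B'(0)) π − Λ^{-1} v). -/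

import Mathlib

open Matrix

/-- Steady-state mean-workload formula of Section 2.1:
`M̃ = (Pᵀ a − I)⁻¹ (Φ π̃ − Λ⁻¹ ṽ)` with `Φ = Λ⁻¹ Pᵀ + Pᵀ B*'(0)`, obtained by
differentiating `Z(s) = H(s) Z(a s) − s Λ⁻¹ L(s) v` at `s = 0`. -/
theorem stmt_18 (N : ℕ) (hN : 1 ≤ N) (a : ℝ) (ha : a ∈ Set.Ioo (0:ℝ) 1)
    (lam : Fin N → ℝ) (hlam : ∀ j, 0 < lam j)
    (p : Fin N → Fin N → ℝ) (hp0 : ∀ i j, 0 ≤ p i j) (hp1 : ∀ i, ∑ j, p i j = 1)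
    (v π : Fin N → ℂ) (ε : ℝ) (hε : 0 < ε) (hεlam : ∀ j, ε < lam j)
    (b : Fin N → ℝ → ℂ) (hbdiff : ∀ j, DifferentiableAt ℝ (b j) 0)
    (hb0 : ∀ j, b j 0 = 1)
    (L B H : ℝ → Matrix (Fin N) (Fin N) ℂ)
    (hL : ∀ x : ℝ, L x = Matrix.diagonal fun j => (lam j : ℂ) / ((lam j : ℂ) - (x : ℂ)))
    (hB : ∀ x : ℝ, B x = Matrix.diagonal fun j => b j x)
    (hH : ∀ x : ℝ, H x = L x * (Matrix.of fun i j => (p j i : ℂ)) * B x)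
    (Z : ℝ → (Fin N → ℂ)) (hZdiff : DifferentiableAt ℝ Z 0) (hZ0 : Z 0 = π)
    (hZeq : ∀ x ∈ Set.Ioo (-ε) ε,
      Z x = H x *ᵥ Z (a * x) -
        (x : ℂ) • (((Matrix.diagonal fun j => (lam j : ℂ))⁻¹ * L x) *ᵥ v)) :
    ((1 : Matrix (Fin N) (Fin N) ℂ) - (a : ℂ) • (Matrix.of fun i j => (p j i : ℂ)))
        *ᵥ deriv Z 0
      = (((Matrix.diagonal fun j => (lam j : ℂ))⁻¹ * (Matrix.of fun i j => (p j i : ℂ))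
          + (Matrix.of fun i j => (p j i : ℂ)) *
              Matrix.diagonal fun j => deriv (b j) 0) *ᵥ π)
        - (Matrix.diagonal fun j => (lam j : ℂ))⁻¹ *ᵥ v ∧
    (IsUnit ((a : ℂ) • (Matrix.of fun i j => (p j i : ℂ)) -
        (1 : Matrix (Fin N) (Fin N) ℂ)) →
      -deriv Z 0
        = ((a : ℂ) • (Matrix.of fun i j => (p j i : ℂ)) -
            (1 : Matrix (Fin N) (Fin N) ℂ))⁻¹ *ᵥ
            ((((Matrix.diagonal fun j => (lam j : ℂ))⁻¹ *
                (Matrix.of fun i j => (p j i : ℂ))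
              + (Matrix.of fun i j => (p j i : ℂ)) *
                  Matrix.diagonal fun j => deriv (b j) 0) *ᵥ π)
              - (Matrix.diagonal fun j => (lam j : ℂ))⁻¹ *ᵥ v)) := by
  have hlam' : ∀ j, (lam j : ℂ) ≠ 0 := fun j => by
    exact_mod_cast (hlam j).ne'
  set d : Fin N → ℂ := deriv Z 0 with hd
  have hZd : ∀ j, HasDerivAt (fun x => Z x j) (d j) 0 := by
    intro j
    exact hasDerivAt_pi.mp hZdiff.hasDerivAt j
  -- inverse of diagonal lambda
  have hLinv : (Matrix.diagonal fun j => (lam j : ℂ))⁻¹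
      = Matrix.diagonal fun j => (lam j : ℂ)⁻¹ := by
    apply Matrix.inv_eq_right_inv
    rw [Matrix.diagonal_mul_diagonal]
    convert Matrix.diagonal_one using 2
    funext j
    exact mul_inv_cancel₀ (hlam' j)
  -- derivative of lam/(lam - x)
  have hf1 : ∀ i : Fin N, HasDerivAt (fun x : ℝ => (lam i : ℂ) / ((lam i : ℂ) - (x:ℝ)))
      ((lam i : ℂ)⁻¹) 0 := by
    intro i
    have h1 : HasDerivAt (fun s : ℂ => (lam i : ℂ) - s) (-1) 0 := (hasDerivAt_id 0).const_sub _
    have h2 := (h1.inv (by simpa using hlam' i)).const_mul ((lam i : ℂ))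
    have h3 : HasDerivAt (fun s : ℂ => (lam i : ℂ) * ((lam i : ℂ) - s)⁻¹) ((lam i : ℂ)⁻¹) 0 := by
      refine h2.congr_deriv ?_
      rw [sub_zero, neg_neg, mul_one_div, sq, ← div_div, div_self (hlam' i), one_div]
    simp only [div_eq_mul_inv]
    exact h3.comp_ofReal
  -- derivative of Z (a x) j
  have hZa : ∀ j, HasDerivAt (fun x : ℝ => Z (a * x) j) ((a : ℂ) * d j) 0 := by
    intro j
    have h1 : HasDerivAt (fun x : ℝ => a * x) a 0 := by
      simpa using (hasDerivAt_id (0:ℝ)).const_mul a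
    have h2 : HasDerivAt (fun x => Z x j) (d j) (a * 0) := by simpa using hZd j
    have := HasDerivAt.scomp (𝕜 := ℝ) (𝕜' := ℝ) 0 h2 h1
    rw [Complex.real_smul] at this
    exact this
  -- the key componentwise derivative
  have key : ∀ i, HasDerivAt (fun x => Z x i)
      ((∑ j, ((lam i:ℂ)⁻¹ * (p j i) * π j + (p j i) * deriv (b j) 0 * π j
          + (a:ℂ) * (p j i) * d j)) - (lam i:ℂ)⁻¹ * v i) 0 := by
    intro i
    have hg : ∀ x ∈ Set.Ioo (-ε) ε, Z x i =
        (∑ j, ((lam i:ℂ)/((lam i:ℂ) - (x:ℝ)) * (p j i) * b j x) * Z (a*x) j)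
          - (x:ℂ) * ((lam i:ℂ)⁻¹ * ((lam i:ℂ)/((lam i:ℂ) - (x:ℝ))) * v i) := by
      intro x hx
      have h1 := congrFun (hZeq x hx) i
      rw [hLinv] at h1
      simp only [hH, hL, hB, Matrix.diagonal_mul_diagonal, Matrix.mulVec_diagonal,
        Matrix.mulVec, dotProduct, Pi.sub_apply, Pi.smul_apply, Pi.mul_apply,
        smul_eq_mul, Matrix.diagonal_mul, Matrix.mul_diagonal, Matrix.of_apply] at h1
      rw [h1]
      congr 1
      simp [Matrix.diagonal_apply, ite_mul, zero_mul, Finset.sum_ite_eq]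
    -- derivative of the RHS function
    have hterm : ∀ j : Fin N, HasDerivAt
        (fun x : ℝ => ((lam i:ℂ)/((lam i:ℂ) - (x:ℝ)) * (p j i) * b j x) * Z (a*x) j)
        ((lam i:ℂ)⁻¹ * (p j i) * π j + (p j i) * deriv (b j) 0 * π j
          + (a:ℂ) * (p j i) * d j) 0 := by
      intro j
      have h1 := ((hf1 i).mul_const ((p j i : ℂ))).mul ((hbdiff j).hasDerivAt)
      have h2 := h1.mul (hZa j)
      refine h2.congr_deriv ?_
      have e1 : Z (a * 0) j = π j := by simp [hZ0]
      rw [e1]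
      simp only [Pi.mul_apply, hb0 j, Complex.ofReal_zero, sub_zero, div_self (hlam' i), mul_one, one_mul]
      ring
    have hsum := HasDerivAt.sum (fun j (_ : j ∈ Finset.univ) => hterm j)
    have hx : HasDerivAt (fun x : ℝ => (x:ℂ)) 1 0 := (hasDerivAt_id (0:ℂ)).comp_ofReal
    have hsec : HasDerivAt
        (fun x : ℝ => (x:ℂ) * ((lam i:ℂ)⁻¹ * ((lam i:ℂ)/((lam i:ℂ) - (x:ℝ))) * v i))
        ((lam i:ℂ)⁻¹ * v i) 0 := by
      have h3 := hx.mul ((((hf1 i).const_mul ((lam i:ℂ)⁻¹)).mul_const (v i)))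
      refine h3.congr_deriv ?_
      simp [hlam' i, div_self]
    have hG := hsum.sub hsec
    apply hG.congr_of_eventuallyEq
    filter_upwards [Ioo_mem_nhds (by linarith : -ε < (0:ℝ)) hε] with x hx
    simp only [Pi.sub_apply, Finset.sum_apply]
    exact hg x hx
  -- deriv Z 0 componentwise
  have hdval : ∀ i, d i = (∑ j, ((lam i:ℂ)⁻¹ * (p j i) * π j + (p j i) * deriv (b j) 0 * π j
      + (a:ℂ) * (p j i) * d j)) - (lam i:ℂ)⁻¹ * v i := by
    intro i
    have := (key i).deriv
    rw [← this]
    exact (hZd i).deriv.symm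
  -- part 1
  have part1 : ((1 : Matrix (Fin N) (Fin N) ℂ) - (a : ℂ) • (Matrix.of fun i j => (p j i : ℂ)))
        *ᵥ d
      = (((Matrix.diagonal fun j => (lam j : ℂ))⁻¹ * (Matrix.of fun i j => (p j i : ℂ))
          + (Matrix.of fun i j => (p j i : ℂ)) *
              Matrix.diagonal fun j => deriv (b j) 0) *ᵥ π)
        - (Matrix.diagonal fun j => (lam j : ℂ))⁻¹ *ᵥ v := by
    funext i
    rw [hLinv]
    simp only [Matrix.mulVec, dotProduct, Matrix.sub_apply, Matrix.add_apply,
      Pi.sub_apply, Matrix.smul_apply, Matrix.one_apply, Matrix.of_apply, smul_eq_mul,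
      Matrix.mul_diagonal, Matrix.diagonal_mul, sub_mul, ite_mul, one_mul, zero_mul,
      add_mul, Matrix.mulVec_diagonal]
    rw [Finset.sum_sub_distrib]
    simp only [Finset.sum_ite_eq, Finset.mem_univ, if_true]
    rw [hdval i, Finset.sum_add_distrib]
    ring_nf
    simp only [Matrix.diagonal_apply, ite_mul, zero_mul, Finset.sum_ite_eq,
      Finset.mem_univ, if_true]
    rw [sub_eq_neg_add]
  refine ⟨part1, ?_⟩
  intro hU
  set M := ((a : ℂ) • (Matrix.of fun i j => (p j i : ℂ)) -
      (1 : Matrix (Fin N) (Fin N) ℂ)) with hM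
  have hMd : M *ᵥ (-d) = (((Matrix.diagonal fun j => (lam j : ℂ))⁻¹ * (Matrix.of fun i j => (p j i : ℂ))
          + (Matrix.of fun i j => (p j i : ℂ)) *
              Matrix.diagonal fun j => deriv (b j) 0) *ᵥ π)
        - (Matrix.diagonal fun j => (lam j : ℂ))⁻¹ *ᵥ v := by
    rw [← part1]
    rw [hM]
    rw [Matrix.mulVec_neg]
    rw [Matrix.sub_mulVec, Matrix.sub_mulVec]
    abel
  rw [← hMd, Matrix.mulVec_mulVec, Matrix.nonsing_inv_mul M ((Matrix.isUnit_iff_isUnit_det M).mp hU), Matrix.one_mulVec]
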